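/- Let u : ℝ² → ℝ² be continuously differentiable and t₁ ∈ ℝ. Let e₁ = (√3/2, 1/2), e₂ = (−√3/2, 1/2), e₃ = (0, −1), and set f_ν(X) = e_νᵀ (∇u(X)) e_ν for ν = 1,2,3. Let w₁ = (0,0), w₂ = (√3, 0), w₃ = (√3/2, 3/2) and K = (4π/(3√3), 0), so that e^{iK·w₁} = 1, e^{iK·w₂} = e^{i4π/3}, e^{iK·w₃} = e^{i2π/3}. Define the effective Hamiltonian acting on continuously differentiable Φ = (Φ^A, Φ^B) : ℝ² → ℂ² by (H_eff Φ)^A = Σ_{ν=1}^{3} e^{iK·w_ν} (w_ν·∇Φ^B + t₁ f_ν Φ^B) and (H_eff Φ)^B = Σ_{ν=1}^{3} e^{−iK·w_ν} (−w_ν·∇Φ^A + t₁ f_ν Φ^A). Define the magnetic potential A₁(X) = −(t₁/2)(∂_{X₁}u₁ − ∂_{X₂}u₂)(X), A₂(X) = (t₁/2)(∂_{X₁}u₂ + ∂_{X₂}u₁)(X), and the magnetic Dirac operator 𝒟_A Φ = (3/2)[(−i∂_{X₁} − A₁)σ₁ Φ + (−i∂_{X₂} − A₂)σ₂ Φ].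 Then with U = diag(e^{−iπ/6}, e^{iπ/6}) one has, pointwise for every X ∈ ℝ² and every continuously differentiable Φ : ℝ² → ℂ², (H_eff Φ)(X) = U · (𝒟_A (U* Φ))(X); that is, H_eff is unitarily equivalent to the magnetic Dirac operator 𝒟_A via the constant unitary matrix U. -/

import Mathlib

noncomputable section

open Complex Real

/-- Partial derivative in the first variable of a function on `ℝ × ℝ`. -/
def pdx {E : Type*} [NormedAddCommGroup E] [NormedSpace ℝ E] (g : ℝ × ℝ → E) (X : ℝ × ℝ) : E :=
  deriv (fun t => g (t, X.2)) X.1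

/-- Partial derivative in the second variable of a function on `ℝ × ℝ`. -/
def pdy {E : Type*} [NormedAddCommGroup E] [NormedSpace ℝ E] (g : ℝ × ℝ → E) (X : ℝ × ℝ) : E :=
  deriv (fun t => g (X.1, t)) X.2

/-- The bond vectors `e₁ = (√3/2, 1/2)`, `e₂ = (−√3/2, 1/2)`, `e₃ = (0, −1)`. -/
def ee : Fin 3 → ℝ × ℝ := ![(Real.sqrt 3 / 2, 1 / 2), (-(Real.sqrt 3) / 2, 1 / 2), (0, -1)]

/-- The vectors `w₁ = (0,0)`, `w₂ = (√3, 0)`, `w₃ = (√3/2, 3/2)`. -/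
def ww : Fin 3 → ℝ × ℝ := ![(0, 0), (Real.sqrt 3, 0), (Real.sqrt 3 / 2, 3 / 2)]

/-- The high-symmetry quasimomentum `K = (4π/(3√3), 0)`. -/
def KK : ℝ × ℝ := (4 * π / (3 * Real.sqrt 3), 0)

/-- Euclidean dot product on `ℝ × ℝ`. -/
def rdot (a b : ℝ × ℝ) : ℝ := a.1 * b.1 + a.2 * b.2

/-- The strain function `f_ν(X) = e_νᵀ (∇u(X)) e_ν`, where the Jacobian `∇u` has entries
`(∇u)_{ij} = ∂_{X_j} u_i`. -/
def fstrain (u : ℝ × ℝ → ℝ × ℝ) (ν : Fin 3) (X : ℝ × ℝ) : ℝ :=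
  (ee ν).1 * ((ee ν).1 * pdx (fun Y => (u Y).1) X + (ee ν).2 * pdy (fun Y => (u Y).1) X)
    + (ee ν).2 * ((ee ν).1 * pdx (fun Y => (u Y).2) X + (ee ν).2 * pdy (fun Y => (u Y).2) X)

/-- A-component of the effective Hamiltonian
`(H_eff Φ)^A = Σ_ν e^{iK·w_ν} (w_ν·∇Φ^B + t₁ f_ν Φ^B)`. -/
def HeffA (u : ℝ × ℝ → ℝ × ℝ) (t1 : ℝ) (ΦA ΦB : ℝ × ℝ → ℂ) (X : ℝ × ℝ) : ℂ :=
  ∑ ν : Fin 3, Complex.exp (I * ((rdot KK (ww ν) : ℝ) : ℂ)) *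
    (((ww ν).1 : ℂ) * pdx ΦB X + ((ww ν).2 : ℂ) * pdy ΦB X
      + (t1 : ℂ) * ((fstrain u ν X : ℝ) : ℂ) * ΦB X)

/-- B-component of the effective Hamiltonian
`(H_eff Φ)^B = Σ_ν e^{−iK·w_ν} (−w_ν·∇Φ^A + t₁ f_ν Φ^A)`. -/
def HeffB (u : ℝ × ℝ → ℝ × ℝ) (t1 : ℝ) (ΦA ΦB : ℝ × ℝ → ℂ) (X : ℝ × ℝ) : ℂ :=
  ∑ ν : Fin 3, Complex.exp (-I * ((rdot KK (ww ν) : ℝ) : ℂ)) *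
    (-(((ww ν).1 : ℂ) * pdx ΦA X) - ((ww ν).2 : ℂ) * pdy ΦA X
      + (t1 : ℂ) * ((fstrain u ν X : ℝ) : ℂ) * ΦA X)

/-- First component of the effective magnetic potential
`A₁(X) = −(t₁/2)(∂_{X₁}u₁ − ∂_{X₂}u₂)`. -/
def Aone (u : ℝ × ℝ → ℝ × ℝ) (t1 : ℝ) (X : ℝ × ℝ) : ℝ :=
  -(t1 / 2) * (pdx (fun Y => (u Y).1) X - pdy (fun Y => (u Y).2) X)

/-- Second component of the effective magnetic potential
`A₂(X) = (t₁/2)(∂_{X₁}u₂ + ∂_{X₂}u₁)`. -/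
def Atwo (u : ℝ × ℝ → ℝ × ℝ) (t1 : ℝ) (X : ℝ × ℝ) : ℝ :=
  (t1 / 2) * (pdx (fun Y => (u Y).2) X + pdy (fun Y => (u Y).1) X)

/-- A-component of the magnetic Dirac operator
`𝒟_A Φ = (3/2)[(−i∂₁ − A₁)σ₁Φ + (−i∂₂ − A₂)σ₂Φ]`. -/
def DiracA_A (u : ℝ × ℝ → ℝ × ℝ) (t1 : ℝ) (ΦA ΦB : ℝ × ℝ → ℂ) (X : ℝ × ℝ) : ℂ :=
  (3 / 2) * ((-I * pdx ΦB X - ((Aone u t1 X : ℝ) : ℂ) * ΦB X)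
    + (-(pdy ΦB X) + I * ((Atwo u t1 X : ℝ) : ℂ) * ΦB X))

/-- B-component of the magnetic Dirac operator. -/
def DiracA_B (u : ℝ × ℝ → ℝ × ℝ) (t1 : ℝ) (ΦA ΦB : ℝ × ℝ → ℂ) (X : ℝ × ℝ) : ℂ :=
  (3 / 2) * ((-I * pdx ΦA X - ((Aone u t1 X : ℝ) : ℂ) * ΦA X)
    + (pdy ΦA X - I * ((Atwo u t1 X : ℝ) : ℂ) * ΦA X))


lemma pdx_const_mul (c : ℂ) (Φ : ℝ × ℝ → ℂ) (X : ℝ × ℝ) :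
    pdx (fun Y => c * Φ Y) X = c * pdx Φ X := by
  simp [pdx, deriv_const_mul_field]

lemma pdy_const_mul (c : ℂ) (Φ : ℝ × ℝ → ℂ) (X : ℝ × ℝ) :
    pdy (fun Y => c * Φ Y) X = c * pdy Φ X := by
  simp [pdy, deriv_const_mul_field]

lemma exp_I_ofReal (θ : ℝ) :
    Complex.exp (I * (θ : ℂ)) = (Real.cos θ : ℂ) + (Real.sin θ : ℂ) * I := by
  rw [mul_comm, Complex.exp_mul_I, Complex.ofReal_cos, Complex.ofReal_sin]

lemma exp_negI_ofReal (θ : ℝ) :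
    Complex.exp (-I * (θ : ℂ)) = (Real.cos θ : ℂ) - (Real.sin θ : ℂ) * I := by
  have : -I * (θ : ℂ) = I * ((-θ : ℝ) : ℂ) := by push_cast; ring
  rw [this, exp_I_ofReal, Real.cos_neg, Real.sin_neg]
  push_cast; ring

lemma cos_expand : Real.cos (π + π / 3) = -(1/2) ∧ Real.sin (π + π / 3) = -(Real.sqrt 3 / 2)
    ∧ Real.cos (π - π / 3) = -(1/2) ∧ Real.sin (π - π / 3) = Real.sqrt 3 / 2 := by
  simp [Real.cos_add, Real.sin_add, Real.cos_sub, Real.sin_sub,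
    Real.cos_pi_div_three, Real.sin_pi_div_three]

/-- The effective Hamiltonian `H_eff` is unitarily equivalent to the magnetic
Dirac operator `𝒟_A` via the constant unitary matrix `U = diag(e^{−iπ/6}, e^{iπ/6})`:
for every C¹ displacement `u`, every C¹ envelope `Φ = (Φ^A, Φ^B)` and every point `X`,
`(H_eff Φ)(X) = U · (𝒟_A (U* Φ))(X)`. -/
theorem heff_unitarily_equivalent_magnetic_dirac
    (u : ℝ × ℝ → ℝ × ℝ) (hu : ContDiff ℝ 1 u) (t1 : ℝ)
    (ΦA ΦB : ℝ × ℝ → ℂ) (hΦA : ContDiff ℝ 1 ΦA) (hΦB : ContDiff ℝ 1 ΦB) (X : ℝ × ℝ) :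
    HeffA u t1 ΦA ΦB X
        = Complex.exp (-I * (π / 6)) *
            DiracA_A u t1 (fun Y => Complex.exp (I * (π / 6)) * ΦA Y)
              (fun Y => Complex.exp (-I * (π / 6)) * ΦB Y) X ∧
      HeffB u t1 ΦA ΦB X
        = Complex.exp (I * (π / 6)) *
            DiracA_B u t1 (fun Y => Complex.exp (I * (π / 6)) * ΦA Y)
              (fun Y => Complex.exp (-I * (π / 6)) * ΦB Y) X := by
  have hs0 : Real.sqrt 3 ≠ 0 := by positivity
  have hS : ((Real.sqrt 3 : ℝ) : ℂ) ^ 2 = 3 := by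
    rw [← Complex.ofReal_pow, Real.sq_sqrt (by norm_num : (3:ℝ) ≥ 0).le]; norm_num
  have h0 : rdot KK (ww 0) = 0 := by simp [rdot, KK, ww]
  have h1 : rdot KK (ww 1) = π + π / 3 := by
    simp only [rdot, KK, ww, Matrix.cons_val_zero, Matrix.cons_val_one, Matrix.cons_val_two, Matrix.head_cons,
      Matrix.tail_cons]; field_simp; ring
  have h2 : rdot KK (ww 2) = π - π / 3 := by
    simp only [rdot, KK, ww, Matrix.cons_val_one, Matrix.cons_val_two, Matrix.head_cons,
      Matrix.tail_cons]; field_simp; ring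
  obtain ⟨c1, s1, c2, s2⟩ := cos_expand
  have e0 : Complex.exp (I * ((rdot KK (ww 0) : ℝ) : ℂ)) = 1 := by
    rw [h0]; simp
  have e0' : Complex.exp (-I * ((rdot KK (ww 0) : ℝ) : ℂ)) = 1 := by
    rw [h0]; simp
  have e1 : Complex.exp (I * ((rdot KK (ww 1) : ℝ) : ℂ))
      = -(1/2) - ((Real.sqrt 3 : ℝ) : ℂ)/2 * I := by
    rw [h1, exp_I_ofReal, c1, s1]; push_cast; ring
  have e1' : Complex.exp (-I * ((rdot KK (ww 1) : ℝ) : ℂ))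
      = -(1/2) + ((Real.sqrt 3 : ℝ) : ℂ)/2 * I := by
    rw [h1, exp_negI_ofReal, c1, s1]; push_cast; ring
  have e2 : Complex.exp (I * ((rdot KK (ww 2) : ℝ) : ℂ))
      = -(1/2) + ((Real.sqrt 3 : ℝ) : ℂ)/2 * I := by
    rw [h2, exp_I_ofReal, c2, s2]; push_cast; ring
  have e2' : Complex.exp (-I * ((rdot KK (ww 2) : ℝ) : ℂ))
      = -(1/2) - ((Real.sqrt 3 : ℝ) : ℂ)/2 * I := by
    rw [h2, exp_negI_ofReal, c2, s2]; push_cast; ring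
  have e6 : Complex.exp (I * (((π : ℝ) : ℂ) / 6))
      = ((Real.sqrt 3 : ℝ) : ℂ)/2 + (1/2) * I := by
    have h : I * (((π : ℝ) : ℂ) / 6) = I * ((π/6 : ℝ) : ℂ) := by push_cast; ring
    rw [h, exp_I_ofReal, Real.cos_pi_div_six, Real.sin_pi_div_six]; push_cast; ring
  have e6' : Complex.exp (-I * (((π : ℝ) : ℂ) / 6))
      = ((Real.sqrt 3 : ℝ) : ℂ)/2 - (1/2) * I := by
    have h : -I * (((π : ℝ) : ℂ) / 6) = -I * ((π/6 : ℝ) : ℂ) := by push_cast; ring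
    rw [h, exp_negI_ofReal, Real.cos_pi_div_six, Real.sin_pi_div_six]; push_cast; ring
  constructor
  · simp only [HeffA, DiracA_A, Fin.sum_univ_three, pdx_const_mul, pdy_const_mul,
      e0, e1, e2, e6, e6']
    simp only [fstrain, Aone, Atwo, ee, ww, Matrix.cons_val_zero, Matrix.cons_val_one,
      Matrix.head_cons, Matrix.cons_val_two, Matrix.tail_cons]
    push_cast
    have hI : (I:ℂ)^2 = -1 := Complex.I_sq
    set Sc : ℂ := ((Real.sqrt 3 : ℝ) : ℂ) with hSc
    set av : ℂ := ((pdx (fun Y => (u Y).1) X : ℝ) : ℂ) with hav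
    set bv : ℂ := ((pdy (fun Y => (u Y).1) X : ℝ) : ℂ) with hbv
    set cv : ℂ := ((pdx (fun Y => (u Y).2) X : ℝ) : ℂ) with hcv
    set dv : ℂ := ((pdy (fun Y => (u Y).2) X : ℝ) : ℂ) with hdv
    linear_combination (3/8*pdy ΦB X + 3/16*(t1:ℂ)*dv*ΦB X - 1/16*(t1:ℂ)*av*ΦB X
        + 1/8*I*pdx ΦB X - 1/16*I*(t1:ℂ)*cv*ΦB X - 1/16*I*(t1:ℂ)*bv*ΦB X
        - 1/8*Sc*I*(t1:ℂ)*av*ΦB X) * hS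
      + (3/8*pdy ΦB X + 3/16*(t1:ℂ)*dv*ΦB X - 3/16*(t1:ℂ)*av*ΦB X + 3/8*I*pdx ΦB X
        - 3/16*I*(t1:ℂ)*cv*ΦB X - 3/16*I*(t1:ℂ)*bv*ΦB X - 3/4*Sc*pdx ΦB X
        + 3/8*Sc*(t1:ℂ)*cv*ΦB X + 3/8*Sc*(t1:ℂ)*bv*ΦB X) * hI
  · simp only [HeffB, DiracA_B, Fin.sum_univ_three, pdx_const_mul, pdy_const_mul,
      e0', e1', e2', e6, e6']
    simp only [fstrain, Aone, Atwo, ee, ww, Matrix.cons_val_zero, Matrix.cons_val_one,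
      Matrix.head_cons, Matrix.cons_val_two, Matrix.tail_cons]
    push_cast
    have hI : (I:ℂ)^2 = -1 := Complex.I_sq
    set Sc : ℂ := ((Real.sqrt 3 : ℝ) : ℂ) with hSc
    set av : ℂ := ((pdx (fun Y => (u Y).1) X : ℝ) : ℂ) with hav
    set bv : ℂ := ((pdy (fun Y => (u Y).1) X : ℝ) : ℂ) with hbv
    set cv : ℂ := ((pdx (fun Y => (u Y).2) X : ℝ) : ℂ) with hcv
    set dv : ℂ := ((pdy (fun Y => (u Y).2) X : ℝ) : ℂ) with hdv
    linear_combination (-3/8*pdy ΦA X + 3/16*(t1:ℂ)*dv*ΦA X - 1/16*(t1:ℂ)*av*ΦA X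
        + 1/8*I*pdx ΦA X + 1/16*I*(t1:ℂ)*cv*ΦA X + 1/16*I*(t1:ℂ)*bv*ΦA X
        + 1/8*Sc*I*(t1:ℂ)*av*ΦA X) * hS
      + (-3/8*pdy ΦA X + 3/16*(t1:ℂ)*dv*ΦA X - 3/16*(t1:ℂ)*av*ΦA X + 3/8*I*pdx ΦA X
        + 3/16*I*(t1:ℂ)*cv*ΦA X + 3/16*I*(t1:ℂ)*bv*ΦA X + 3/4*Sc*pdx ΦA X
        + 3/8*Sc*(t1:ℂ)*cv*ΦA X + 3/8*Sc*(t1:ℂ)*bv*ΦA X) * hI
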